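/- Let I ⊆ R = K[x_0,...,x_n] be a saturated strongly stable ideal and x^A an expandable minimal generator of I (i.e., no right-shift of x^A is a minimal generator of I). Then the expansion I^exp, generated by (G(I) \ {x^A}) ∪ {x^A x_r, x^A x_{r+1},..., x^A x_{n−1}} with r = max(x^A), is a saturated strongly stable ideal. -/

import Mathlib

open MvPolynomial

noncomputable section

/-- The polynomial ring `K[x_0,…,x_n]` in `n+1` variables. -/
abbrev PR (K : Type*) [Field K] (n : ℕ) := MvPolynomial (Fin (n+1)) K

variable {K : Type*} [Field K] {n : ℕ}

/-- The monomial `x^A`. -/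
def mon (A : Fin (n+1) →₀ ℕ) : PR K n := monomial A 1

/-- Total degree of the monomial with exponent vector `A`. -/
def mdeg (A : Fin (n+1) →₀ ℕ) : ℕ := ∑ i, A i

/-- The largest index of a variable dividing `x^A` (0 if `A = 0`). -/
def maxIdx (A : Fin (n+1) →₀ ℕ) : Fin (n+1) := WithBot.unbotD 0 (A.support.max)

/-- The exponent vector of `(x_i / x_j) · x^A`. -/
def shiftM (A : Fin (n+1) →₀ ℕ) (i j : Fin (n+1)) : Fin (n+1) →₀ ℕ :=
  A + Finsupp.single i 1 - Finsupp.single j 1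

/-- `I` is a monomial ideal: generated by a set of monomials. -/
def IsMonomialIdeal (I : Ideal (PR K n)) : Prop :=
  ∃ S : Set (Fin (n+1) →₀ ℕ), I = Ideal.span ((fun A => (mon A : PR K n)) '' S)

/-- Strongly stable monomial ideal. -/
def StronglyStable (I : Ideal (PR K n)) : Prop :=
  ∀ A : Fin (n+1) →₀ ℕ, mon A ∈ I → ∀ i j : Fin (n+1), A j ≠ 0 → i < j →
    mon (shiftM A i j) ∈ I

/-- Stable monomial ideal. -/
def Stable (I : Ideal (PR K n)) : Prop :=
  ∀ A : Fin (n+1) →₀ ℕ, A ≠ 0 → mon A ∈ I → ∀ i : Fin (n+1), i < maxIdx A →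
    mon (shiftM A i (maxIdx A)) ∈ I

/-- `x^A` is a minimal monomial generator of `I`. -/
def MinGen (I : Ideal (PR K n)) (A : Fin (n+1) →₀ ℕ) : Prop :=
  mon A ∈ I ∧ ∀ B : Fin (n+1) →₀ ℕ, B ≤ A → B ≠ A → mon B ∉ I

/-- The set of exponent vectors of minimal monomial generators of `I`. -/
def Gens (I : Ideal (PR K n)) : Set (Fin (n+1) →₀ ℕ) := {A | MinGen I A}

/-- The irrelevant maximal ideal `(x_0,…,x_n)`. -/
def irrIdeal (K : Type*) [Field K] (n : ℕ) : Ideal (PR K n) :=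
  Ideal.span (Set.range fun i : Fin (n+1) => (X i : PR K n))

/-- `I` is saturated: `(I : (x_0,…,x_n)) = I`. -/
def Saturated (I : Ideal (PR K n)) : Prop :=
  Submodule.colon I (irrIdeal K n) = I

/-- The saturation `∪ₖ (I : (x_0,…,x_n)^k)`. -/
def saturationOf (I : Ideal (PR K n)) : Ideal (PR K n) :=
  ⨆ k : ℕ, Submodule.colon I (((irrIdeal K n) ^ k : Ideal (PR K n)) : Set (PR K n))

/-- The Hilbert function of `R/I`: `j ↦ dim_K [R/I]_j`. -/
def hilbF {σ : Type*} (I : Ideal (MvPolynomial σ K)) (j : ℕ) : ℕ :=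
  Module.finrank K
    ((homogeneousSubmodule σ K j).map (Ideal.Quotient.mkₐ K I).toLinearMap)

/-- `p` is the Hilbert polynomial of `R/I`. -/
def IsHilbPoly {σ : Type*} (I : Ideal (MvPolynomial σ K)) (p : Polynomial ℚ) : Prop :=
  ∃ N : ℕ, ∀ j : ℕ, N ≤ j → p.eval (j : ℚ) = (hilbF I j : ℚ)

/-- The binomial-coefficient polynomial `C(q, k) = q(q-1)⋯(q-k+1)/k!`. -/
def choosePoly (q : Polynomial ℚ) (k : ℕ) : Polynomial ℚ :=
  ((k.factorial : ℚ))⁻¹ • ∏ j ∈ Finset.range k, (q - Polynomial.C (j : ℚ))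

/-- The canonical representation `p(z) = Σ_{i=0}^d [C(z+i,i+1) − C(z+i−b_i,i+1)]`. -/
def canonicalHP (d : ℕ) (b : ℕ → ℕ) : Polynomial ℚ :=
  ∑ i ∈ Finset.range (d+1),
    (choosePoly (Polynomial.X + Polynomial.C (i : ℚ)) (i+1)
      - choosePoly (Polynomial.X + Polynomial.C (i : ℚ) - Polynomial.C (b i : ℚ)) (i+1))

/-- `x^A >_lex x^B`. -/
def LexGt (A B : Fin (n+1) →₀ ℕ) : Prop :=
  ∃ i : Fin (n+1), (∀ j : Fin (n+1), j < i → A j = B j) ∧ B i < A i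

/-- `I` is a lexsegment ideal. -/
def IsLexsegment (I : Ideal (PR K n)) : Prop :=
  IsMonomialIdeal I ∧ ∀ A B : Fin (n+1) →₀ ℕ, mdeg A = mdeg B → mon B ∈ I →
    LexGt A B → mon A ∈ I

/-- `I` is a homogeneous ideal. -/
def Homog (I : Ideal (PR K n)) : Prop :=
  ∀ f ∈ I, ∀ j : ℕ, homogeneousComponent j f ∈ I

open Fin.NatCast in
/-- The set of right-shifts of `x^A`. -/
def rightShifts (A : Fin (n+1) →₀ ℕ) : Set (Fin (n+1) →₀ ℕ) :=
  {B | ∃ i : Fin (n+1), (i : ℕ) + 2 ≤ n ∧ A i ≠ 0 ∧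
    B = shiftM A ((((i : ℕ) + 1 : ℕ)) : Fin (n+1)) i}

open Fin.NatCast in
/-- The set of left-shifts of `x^A`. -/
def leftShifts (A : Fin (n+1) →₀ ℕ) : Set (Fin (n+1) →₀ ℕ) :=
  {B | ∃ i : Fin (n+1), 1 ≤ (i : ℕ) ∧ (i : ℕ) + 1 ≤ n ∧ A i ≠ 0 ∧
    B = shiftM A ((((i : ℕ) - 1 : ℕ)) : Fin (n+1)) i}

/-- The monomials `x^A x_r, …, x^A x_{n-1}` with `r = max(x^A)`. -/
def expSet (A : Fin (n+1) →₀ ℕ) : Set (Fin (n+1) →₀ ℕ) :=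
  {B | ∃ j : Fin (n+1), ((maxIdx A : ℕ)) ≤ (j : ℕ) ∧ (j : ℕ) + 1 ≤ n ∧
    B = A + Finsupp.single j 1}

/-- `x^A ≠ 1` is expandable in `I`. -/
def Expandable (I : Ideal (PR K n)) (A : Fin (n+1) →₀ ℕ) : Prop :=
  A ≠ 0 ∧ MinGen I A ∧ ∀ B ∈ rightShifts A, ¬ MinGen I B

open Fin.NatCast in
/-- `x^A ≠ 1` is contractible in `I`. -/
def Contractible (I : Ideal (PR K n)) (A : Fin (n+1) →₀ ℕ) : Prop :=
  A ≠ 0 ∧ mon A ∉ I ∧ MinGen I (A + Finsupp.single (((n - 1 : ℕ)) : Fin (n+1)) 1) ∧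
    ∀ B ∈ leftShifts A, mon B ∈ I

/-- The expansion of `x^A` in `I`. -/
def expansionIdeal (I : Ideal (PR K n)) (A : Fin (n+1) →₀ ℕ) : Ideal (PR K n) :=
  Ideal.span ((fun B => (mon B : PR K n)) '' ((Gens I \ {A}) ∪ expSet A))

/-- The contraction of `x^A` in `I`. -/
def contractionIdeal (I : Ideal (PR K n)) (A : Fin (n+1) →₀ ℕ) : Ideal (PR K n) :=
  Ideal.span ((fun B => (mon B : PR K n)) '' ((Gens I ∪ {A}) \ expSet A))

open Fin.NatCast in
/-- Setting `x_{n-1} = x_n = 1` in the exponent vector `A`. -/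
def stripLastTwo (A : Fin (n+1) →₀ ℕ) : Fin (n+1) →₀ ℕ :=
  Finsupp.update (Finsupp.update A (((n : ℕ)) : Fin (n+1)) 0) (((n - 1 : ℕ)) : Fin (n+1)) 0

/-- The double saturation `sat_{x_{n-1},x_n}(I)` (as an ideal of `R`). -/
def doubleSat (I : Ideal (PR K n)) : Ideal (PR K n) :=
  Ideal.span ((fun A => (mon (stripLastTwo A) : PR K n)) '' Gens I)

/-- Restriction of an exponent vector to the first `n` variables. -/
def restrictExp (A : Fin (n+1) →₀ ℕ) : Fin n →₀ ℕ :=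
  Finsupp.comapDomain Fin.castSucc A (Fin.castSucc_injective n).injOn

/-- The ideal `I · R^{(1)}` in `K[x_0,…,x_{n-1}]` (for saturated monomial `I`). -/
def restrictIdeal (I : Ideal (PR K n)) : Ideal (MvPolynomial (Fin n) K) :=
  Ideal.span ((fun A => (monomial (restrictExp A) (1 : K) : MvPolynomial (Fin n) K)) '' Gens I)

/-- Lex order on exponent vectors in `n` variables. -/
def LexGt' (A B : Fin n →₀ ℕ) : Prop :=
  ∃ i : Fin n, (∀ j : Fin n, j < i → A j = B j) ∧ B i < A i

/-- Monomial ideal in `K[x_0,…,x_{n-1}]`. -/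
def IsMonomialIdeal' (I : Ideal (MvPolynomial (Fin n) K)) : Prop :=
  ∃ S : Set (Fin n →₀ ℕ),
    I = Ideal.span ((fun A => (monomial A (1 : K) : MvPolynomial (Fin n) K)) '' S)

/-- Lexsegment ideal in `K[x_0,…,x_{n-1}]`. -/
def IsLexsegment' (I : Ideal (MvPolynomial (Fin n) K)) : Prop :=
  IsMonomialIdeal' I ∧ ∀ A B : Fin n →₀ ℕ, (∑ i, A i) = (∑ i, B i) →
    monomial B (1 : K) ∈ I → LexGt' A B → monomial A (1 : K) ∈ I

/-- `I` is almost lexsegment: saturated strongly stable with `I·R^{(1)}` lexsegment. -/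
def AlmostLex (I : Ideal (PR K n)) : Prop :=
  IsMonomialIdeal I ∧ StronglyStable I ∧ Saturated I ∧ IsLexsegment' (restrictIdeal I)

/-- A graded free resolution of the ideal `I`, with `rank i` the rank of the `i`-th
free module and `twist i k` the degrees of the standard basis elements. -/
structure GradedFreeRes (I : Ideal (PR K n)) where
  rank : ℕ → ℕ
  twist : (i : ℕ) → Fin (rank i) → ℕ
  diff : (i : ℕ) → ((Fin (rank (i+1)) → PR K n) →ₗ[PR K n] (Fin (rank i) → PR K n))
  aug : (Fin (rank 0) → PR K n) →ₗ[PR K n] PR K n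
  aug_range : LinearMap.range aug = I
  aug_graded : ∀ k, aug (Pi.single k 1) ∈ homogeneousSubmodule (Fin (n+1)) K (twist 0 k)
  diff_graded : ∀ i k l, diff i (Pi.single k 1) l = 0 ∨
    (twist i l ≤ twist (i+1) k ∧
      diff i (Pi.single k 1) l ∈ homogeneousSubmodule (Fin (n+1)) K (twist (i+1) k - twist i l))
  exact_aug : LinearMap.range (diff 0) = LinearMap.ker aug
  exact_diff : ∀ i, LinearMap.range (diff (i+1)) = LinearMap.ker (diff i)

/-- A resolution is minimal if all differential entries lie in the irrelevant ideal. -/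
def MinimalRes {I : Ideal (PR K n)} (F : GradedFreeRes I) : Prop :=
  ∀ i k l, constantCoeff (F.diff i (Pi.single k 1) l) = 0

end

section Aux

variable {K : Type*} [Field K] {n : ℕ}

lemma shiftM_apply (A : Fin (n+1) →₀ ℕ) (i j k : Fin (n+1)) :
    shiftM A i j k = A k + (if i = k then 1 else 0) - (if j = k then 1 else 0) := by
  simp [shiftM, Finsupp.tsub_apply, Finsupp.add_apply, Finsupp.single_apply]

lemma mem_span_mon_iff {S : Set (Fin (n+1) →₀ ℕ)} {f : PR K n} :
    f ∈ Ideal.span ((fun A => (mon A : PR K n)) '' S) ↔ ∀ m ∈ f.support, ∃ B ∈ S, B ≤ m := by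
  have h : ((fun A => (mon A : PR K n)) '' S) = ((fun s => monomial s (1:K)) '' S) := rfl
  rw [h, mem_ideal_span_monomial_image]

lemma mon_mem_span_iff {S : Set (Fin (n+1) →₀ ℕ)} {C : Fin (n+1) →₀ ℕ} :
    (mon C : PR K n) ∈ Ideal.span ((fun A => (mon A : PR K n)) '' S) ↔ ∃ B ∈ S, B ≤ C := by
  rw [mem_span_mon_iff]
  have : (mon C : PR K n).support = {C} := by
    classical
    rw [mon, support_monomial, if_neg one_ne_zero]
  rw [this]
  simp

lemma mon_mem_of_le {I : Ideal (PR K n)} {B C : Fin (n+1) →₀ ℕ}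
    (hB : (mon B : PR K n) ∈ I) (h : B ≤ C) : (mon C : PR K n) ∈ I := by
  have heq : (mon C : PR K n) = mon (C - B) * mon B := by
    rw [mon, mon, mon, monomial_mul, mul_one, tsub_add_cancel_of_le h]
  rw [heq]
  exact Ideal.mul_mem_left _ _ hB

lemma sum_lt_of_lt {B C : Fin (n+1) →₀ ℕ} (h : B ≤ C) (hne : B ≠ C) :
    ∑ i, B i < ∑ i, C i := by
  obtain ⟨k, hk⟩ : ∃ k, B k ≠ C k := by
    by_contra hc
    push_neg at hc
    exact hne (Finsupp.ext hc)
  exact Finset.sum_lt_sum (fun i _ => Finsupp.le_def.mp h i)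
    ⟨k, Finset.mem_univ k, lt_of_le_of_ne (Finsupp.le_def.mp h k) hk⟩

lemma exists_minGen_le (I : Ideal (PR K n)) (s : Fin (n+1) →₀ ℕ)
    (hs : (mon s : PR K n) ∈ I) : ∃ B ∈ Gens I, B ≤ s := by
  generalize hN : (∑ i, s i) = N
  induction N using Nat.strong_induction_on generalizing s with
  | _ N ih =>
    by_cases h : ∀ B : Fin (n+1) →₀ ℕ, B ≤ s → B ≠ s → (mon B : PR K n) ∉ I
    · exact ⟨s, ⟨hs, h⟩, le_rfl⟩
    · push_neg at h
      obtain ⟨B, hBs, hne, hBI⟩ := h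
      obtain ⟨D, hD, hDB⟩ := ih (∑ i, B i) (hN ▸ sum_lt_of_lt hBs hne) B hBI rfl
      exact ⟨D, hD, hDB.trans hBs⟩

lemma maxIdx_apply_ne_zero {A : Fin (n+1) →₀ ℕ} (hA : A ≠ 0) : A (maxIdx A) ≠ 0 := by
  have hsupp : A.support.Nonempty := Finsupp.support_nonempty_iff.mpr hA
  obtain ⟨m, hm⟩ := Finset.max_of_nonempty hsupp
  have h1 : maxIdx A = m := by rw [maxIdx, hm]; rfl
  rw [h1]
  exact Finsupp.mem_support_iff.mp (Finset.mem_of_max hm)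

lemma le_maxIdx {A : Fin (n+1) →₀ ℕ} {k : Fin (n+1)} (hk : A k ≠ 0) : k ≤ maxIdx A := by
  have hmem := Finsupp.mem_support_iff.mpr hk
  obtain ⟨m, hm⟩ := Finset.max_of_nonempty ⟨k, hmem⟩
  have h1 : maxIdx A = m := by rw [maxIdx, hm]; rfl
  have h2 := Finset.le_max hmem
  rw [hm] at h2
  rw [h1]
  exact_mod_cast h2

lemma X_mem_irr (i : Fin (n+1)) : (X i : PR K n) ∈ irrIdeal K n :=
  Ideal.subset_span ⟨i, rfl⟩

lemma mem_colon_irr {I : Ideal (PR K n)} {f : PR K n}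
    (h : ∀ i : Fin (n+1), f * X i ∈ I) : f ∈ Submodule.colon I (irrIdeal K n) := by
  rw [Submodule.mem_colon]
  intro p hp
  rw [smul_eq_mul, mul_comm]
  refine Submodule.span_induction ?_ ?_ ?_ ?_ hp
  · rintro x ⟨i, rfl⟩
    rw [mul_comm]; exact h i
  · simp
  · intro a b _ _ ha hb
    rw [add_mul]; exact I.add_mem ha hb
  · intro a x _ hx
    rw [smul_eq_mul, mul_assoc]
    exact Ideal.mul_mem_left _ _ hx

lemma mon_mul_X (B : Fin (n+1) →₀ ℕ) (i : Fin (n+1)) :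
    (mon B : PR K n) * X i = mon (B + Finsupp.single i 1) := by
  rw [mon, mon, X, monomial_mul, mul_one]

lemma minGen_last_eq_zero {I : Ideal (PR K n)} (hss : StronglyStable I) (hsat : Saturated I)
    {B : Fin (n+1) →₀ ℕ} (hB : MinGen I B) : B (Fin.last n) = 0 := by
  by_contra hne
  set B' := B - Finsupp.single (Fin.last n) 1 with hB'
  have hB'app : ∀ k, B' k = B k - (if Fin.last n = k then 1 else 0) := by
    intro k
    rw [hB', Finsupp.tsub_apply, Finsupp.single_apply]
  have hle : B' ≤ B := by
    rw [Finsupp.le_def]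
    intro k
    rw [hB'app k]
    omega
  have hne' : B' ≠ B := by
    intro h
    have := congrArg (fun f : Fin (n+1) →₀ ℕ => f (Fin.last n)) h
    simp only [hB'app] at this
    simp at this
    omega
  have hmem : (mon B' : PR K n) ∈ I := by
    rw [← hsat]
    apply mem_colon_irr
    intro i
    rw [mon_mul_X]
    rcases eq_or_ne i (Fin.last n) with h | h
    · subst h
      have heq : B' + Finsupp.single (Fin.last n) 1 = B := by
        ext k
        rw [Finsupp.add_apply, hB'app k, Finsupp.single_apply]
        rcases eq_or_ne (Fin.last n) k with hk | hk
        · simp only [if_pos hk]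
          subst hk
          omega
        · simp only [if_neg hk]
          omega
      rw [heq]; exact hB.1
    · have hlt : i < Fin.last n := lt_of_le_of_ne (Fin.le_last i) h
      have hmem2 := hss B hB.1 i (Fin.last n) hne hlt
      have heq : B' + Finsupp.single i 1 = shiftM B i (Fin.last n) := by
        ext k
        rw [Finsupp.add_apply, hB'app k, Finsupp.single_apply, shiftM_apply]
        rcases eq_or_ne (Fin.last n) k with hk | hk
        · have h1 : i ≠ k := fun hc => h (hc.trans hk.symm)
          simp only [if_pos hk, if_neg h1]
          subst hk
          omega
        · simp only [if_neg hk]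
          omega
      rwa [heq]
  exact hB.2 B' hle hne' hmem

open Fin.NatCast in
lemma no_rightshift_minGen {I : Ideal (PR K n)} (hss : StronglyStable I)
    {A : Fin (n+1) →₀ ℕ} (hA : Expandable I A) :
    ∀ j i : Fin (n+1), i < j → (j:ℕ) < n → A i ≠ 0 → ¬ MinGen I (shiftM A j i) := by
  have hAgen : MinGen I A := hA.2.1
  suffices H : ∀ m : ℕ, ∀ j i : Fin (n+1), (j:ℕ) = m → i < j → (j:ℕ) < n → A i ≠ 0 →
      ¬ MinGen I (shiftM A j i) from fun j i h1 h2 h3 => H (j:ℕ) j i rfl h1 h2 h3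
  intro m
  induction m using Nat.strong_induction_on with
  | _ m ih =>
  intro j i hjm hij hjn hAi hmin
  have hij' : (i:ℕ) < (j:ℕ) := hij
  have hijne : i ≠ j := ne_of_lt hij
  have hAi1 : 1 ≤ A i := Nat.one_le_iff_ne_zero.mpr hAi
  rcases eq_or_lt_of_le (show (i:ℕ)+1 ≤ (j:ℕ) from hij') with hcase | hcase
  · -- adjacent case: contradicts expandability directly
    refine hA.2.2 (shiftM A j i) ⟨i, by omega, hAi, ?_⟩ hmin
    have hc : ((((i:ℕ) + 1 : ℕ)) : Fin (n+1)) = j := by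
      apply Fin.ext
      rw [Fin.val_natCast, Nat.mod_eq_of_lt (by omega)]
      omega
    rw [hc]
  · -- non-adjacent: shift down and use induction
    have hj1 : 1 ≤ (j:ℕ) := by omega
    set j' : Fin (n+1) := ⟨(j:ℕ)-1, by omega⟩ with hj'def
    have hj'v : (j':ℕ) = (j:ℕ) - 1 := rfl
    have hij'lt : i < j' := by rw [Fin.lt_def, hj'v]; omega
    have hj'j : j' < j := by rw [Fin.lt_def, hj'v]; omega
    have hne1 : j' ≠ j := ne_of_lt hj'j
    have hne2 : i ≠ j' := ne_of_lt hij'lt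
    have hBj : shiftM A j i j ≠ 0 := by
      rw [shiftM_apply, if_pos rfl, if_neg hijne]
      omega
    have h1 : mon (shiftM (shiftM A j i) j' j) ∈ I := hss _ hmin.1 j' j hBj hj'j
    have heq : shiftM (shiftM A j i) j' j = shiftM A j' i := by
      ext k
      rw [shiftM_apply, shiftM_apply, shiftM_apply]
      rcases eq_or_ne j k with h1 | h1
      · have e2 : j' ≠ k := h1 ▸ hne1
        have e3 : i ≠ k := h1 ▸ hijne
        simp only [if_pos h1, if_neg e2, if_neg e3]
        omega
      · rcases eq_or_ne j' k with h2 | h2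
        · have e3 : i ≠ k := h2 ▸ hne2
          simp only [if_pos h2, if_neg h1, if_neg e3]
          omega
        · rcases eq_or_ne i k with h3 | h3
          · subst h3
            simp only [if_pos rfl, if_neg h1, if_neg h2]
            omega
          · simp only [if_neg h1, if_neg h2, if_neg h3]
            omega
    rw [heq] at h1
    obtain ⟨E, hE, hEle⟩ := exists_minGen_le I _ h1
    have hEle' : ∀ k, E k ≤ A k + (if j' = k then 1 else 0) - (if i = k then 1 else 0) := by
      intro k
      have := Finsupp.le_def.mp hEle k
      rwa [shiftM_apply] at this
    have hEi : E i ≤ A i - 1 := by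
      have := hEle' i
      rwa [if_neg (Ne.symm hne2), if_pos rfl] at this
    by_cases hEj' : E j' ≤ A j'
    · -- E is a proper divisor of A in I : contradiction with minimality of A
      have hEA : E ≤ A := by
        rw [Finsupp.le_def]
        intro k
        rcases eq_or_ne j' k with h2 | h2
        · exact h2 ▸ hEj'
        · have := hEle' k
          rw [if_neg h2] at this
          omega
      have hEne : E ≠ A := by
        intro h
        rw [h] at hEi
        omega
      exact hAgen.2 E hEA hEne hE.1
    · have hEj'' : E j' = A j' + 1 := by
        have := hEle' j'
        rw [if_pos rfl, if_neg hne2] at this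
        omega
      have h2 : mon (shiftM E i j') ∈ I :=
        hss E hE.1 i j' (by omega) hij'lt
      have h3 : shiftM E i j' ≤ A := by
        rw [Finsupp.le_def]
        intro k
        rw [shiftM_apply]
        rcases eq_or_ne i k with ha | ha
        · subst ha
          rw [if_pos rfl, if_neg (Ne.symm hne2)]
          omega
        · rcases eq_or_ne j' k with hb | hb
          · subst hb
            rw [if_neg ha, if_pos rfl]
            omega
          · have := hEle' k
            rw [if_neg hb, if_neg ha] at this ⊢
            omega
      have h4 : shiftM E i j' = A := by
        by_contra hne4
        exact hAgen.2 _ h3 hne4 h2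
      have h5 : E = shiftM A j' i := by
        ext k
        have hk4 := DFunLike.congr_fun h4 k
        rw [shiftM_apply] at hk4
        rw [shiftM_apply]
        rcases eq_or_ne i k with ha | ha
        · subst ha
          rw [if_pos rfl, if_neg (Ne.symm hne2)] at hk4
          rw [if_neg (Ne.symm hne2), if_pos rfl]
          omega
        · rcases eq_or_ne j' k with hb | hb
          · subst hb
            rw [if_pos rfl]
            rw [if_neg hne2]
            omega
          · rw [if_neg ha, if_neg hb] at hk4
            rw [if_neg hb, if_neg ha]
            omega
      exact ih ((j':ℕ)) (by omega) j' i rfl hij'lt (by omega) hAi (h5 ▸ hE)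

lemma exists_gen_lt_add_single {I : Ideal (PR K n)} (hss : StronglyStable I)
    {A : Fin (n+1) →₀ ℕ} (hA : MinGen I A) {i : Fin (n+1)} (hi : i < maxIdx A) :
    ∃ B ∈ Gens I, B ≠ A ∧ B ≤ A + Finsupp.single i 1 := by
  have hA0 : A ≠ 0 := by
    intro h
    rw [h] at hi
    simp [maxIdx] at hi
  have hr : A (maxIdx A) ≠ 0 := maxIdx_apply_ne_zero hA0
  have hir : i ≠ maxIdx A := ne_of_lt hi
  have hV : mon (shiftM A i (maxIdx A)) ∈ I := hss A hA.1 i (maxIdx A) hr hi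
  obtain ⟨B, hB, hle⟩ := exists_minGen_le I _ hV
  have hle' : ∀ k, B k ≤ A k + (if i = k then 1 else 0) - (if maxIdx A = k then 1 else 0) := by
    intro k
    have := Finsupp.le_def.mp hle k
    rwa [shiftM_apply] at this
  refine ⟨B, hB, ?_, ?_⟩
  · intro h
    have hr1 : 1 ≤ A (maxIdx A) := Nat.one_le_iff_ne_zero.mpr hr
    have hx := hle' (maxIdx A)
    rw [if_neg hir, if_pos rfl, h] at hx
    omega
  · rw [Finsupp.le_def]
    intro k
    have := hle' k
    rw [Finsupp.add_apply, Finsupp.single_apply]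
    rcases eq_or_ne i k with h1 | h1
    · rw [if_pos h1] at this ⊢
      omega
    · rw [if_neg h1] at this ⊢
      omega

lemma mem_expansion_iff {I : Ideal (PR K n)} {A C : Fin (n+1) →₀ ℕ} :
    (mon C : PR K n) ∈ expansionIdeal I A ↔
      ∃ B ∈ (Gens I \ {A} : Set _) ∪ expSet A, B ≤ C := by
  rw [expansionIdeal]
  exact mon_mem_span_iff

lemma mon_mem_expansion {I : Ideal (PR K n)} {A B : Fin (n+1) →₀ ℕ}
    (hB : B ∈ (Gens I \ {A} : Set _) ∪ expSet A) : (mon B : PR K n) ∈ expansionIdeal I A :=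
  Ideal.subset_span ⟨B, hB, rfl⟩

lemma expansion_le {I : Ideal (PR K n)} {A : Fin (n+1) →₀ ℕ} (hA : MinGen I A) :
    expansionIdeal I A ≤ I := by
  rw [expansionIdeal]
  apply Ideal.span_le.mpr
  rintro _ ⟨B, hB, rfl⟩
  rcases hB with ⟨hB, -⟩ | ⟨j, _, _, rfl⟩
  · exact hB.1
  · refine mon_mem_of_le hA.1 (Finsupp.le_def.mpr fun k => ?_)
    rw [Finsupp.add_apply]
    omega

lemma expansion_gen_last {I : Ideal (PR K n)} (hss : StronglyStable I) (hsat : Saturated I)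
    {A : Fin (n+1) →₀ ℕ} (hA : Expandable I A) {B : Fin (n+1) →₀ ℕ}
    (hB : B ∈ (Gens I \ {A} : Set _) ∪ expSet A) : B (Fin.last n) = 0 := by
  rcases hB with ⟨hB, -⟩ | ⟨j, hj1, hj2, rfl⟩
  · exact minGen_last_eq_zero hss hsat hB
  · have hA0 : A (Fin.last n) = 0 := minGen_last_eq_zero hss hsat hA.2.1
    have hj : j ≠ Fin.last n := by
      intro h
      rw [h, Fin.val_last] at hj2
      omega
    rw [Finsupp.add_apply, hA0, Finsupp.single_apply, if_neg hj]
    rfl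

end Aux

/-- the expansion of an expandable minimal generator of a saturated
strongly stable ideal is again a saturated strongly stable ideal. -/
theorem expansion_saturated_stronglyStable
    {K : Type*} [Field K] {n : ℕ} (hn : 2 ≤ n) (I : Ideal (PR K n))
    (hmono : IsMonomialIdeal I) (hss : StronglyStable I) (hsat : Saturated I)
    (A : Fin (n+1) →₀ ℕ) (hA : Expandable I A) :
    IsMonomialIdeal (expansionIdeal I A) ∧ StronglyStable (expansionIdeal I A) ∧
      Saturated (expansionIdeal I A) := by
  have hAgen : MinGen I A := hA.2.1
  refine ⟨⟨(Gens I \ {A}) ∪ expSet A, rfl⟩, ?_, ?_⟩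
  · -- Strongly stable
    intro C hC i₀ j₀ hCj₀ hij
    have hCI : (mon C : PR K n) ∈ I := expansion_le hAgen hC
    set C' := shiftM C i₀ j₀ with hC'def
    have hC'I : (mon C' : PR K n) ∈ I := hss C hCI i₀ j₀ hCj₀ hij
    obtain ⟨D, hD, hDle⟩ := exists_minGen_le I _ hC'I
    by_cases hDA : D = A
    swap
    · exact mon_mem_of_le (mon_mem_expansion (Or.inl ⟨hD, hDA⟩)) hDle
    rw [hDA] at hDle
    have hAC' : ∀ k, A k ≤ C' k := Finsupp.le_def.mp hDle
    have hi₀j₀ : (i₀:ℕ) < (j₀:ℕ) := Fin.lt_def.mp hij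
    have hne₀ : i₀ ≠ j₀ := ne_of_lt hij
    have hj₀n : (j₀:ℕ) ≤ n := Fin.is_le j₀
    have hC'app : ∀ k, C' k = C k + (if i₀ = k then 1 else 0) - (if j₀ = k then 1 else 0) :=
      fun k => shiftM_apply C i₀ j₀ k
    by_cases hd : ∃ k : Fin (n+1), (k:ℕ) < n ∧ A k < C' k
    · obtain ⟨k, hkn, hkC⟩ := hd
      by_cases hkr : (maxIdx A : ℕ) ≤ (k:ℕ)
      · refine mon_mem_of_le (mon_mem_expansion (Or.inr ⟨k, hkr, by omega, rfl⟩)) ?_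
        rw [Finsupp.le_def]
        intro l
        rw [Finsupp.add_apply, Finsupp.single_apply]
        rcases eq_or_ne k l with h | h
        · subst h
          rw [if_pos rfl]
          omega
        · rw [if_neg h]
          have := hAC' l
          omega
      · push_neg at hkr
        have hklt : k < maxIdx A := Fin.lt_def.mpr hkr
        obtain ⟨B, hB, hBne, hBle⟩ := exists_gen_lt_add_single hss hAgen hklt
        refine mon_mem_of_le (mon_mem_expansion (Or.inl ⟨hB, hBne⟩)) ?_
        refine hBle.trans (Finsupp.le_def.mpr fun l => ?_)
        rw [Finsupp.add_apply, Finsupp.single_apply]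
        rcases eq_or_ne k l with h | h
        · subst h
          rw [if_pos rfl]
          omega
        · rw [if_neg h]
          have := hAC' l
          omega
    · exfalso
      push_neg at hd
      have hC'A : ∀ k : Fin (n+1), (k:ℕ) < n → C' k = A k :=
        fun k hk => le_antisymm (hd k hk) (hAC' k)
      have hi₀n : (i₀:ℕ) < n := by omega
      have hC'i₀ : C' i₀ = C i₀ + 1 := by
        rw [hC'app i₀, if_pos rfl, if_neg (Ne.symm hne₀)]
        omega
      have hAi₀ : A i₀ = C i₀ + 1 := by rw [← hC'A i₀ hi₀n, hC'i₀]
      obtain ⟨g, hg, hgle⟩ := mem_expansion_iff.mp hC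
      have hgle' := Finsupp.le_def.mp hgle
      rcases hg with ⟨hg, hgA⟩ | ⟨j, hj1, hj2, rfl⟩
      · -- g is a minimal generator other than A
        have hglast : g (Fin.last n) = 0 := minGen_last_eq_zero hss hsat hg
        have hCk : ∀ k : Fin (n+1), (k:ℕ) < n → j₀ ≠ k → C k = A k - (if i₀ = k then 1 else 0) := by
          intro k hk hjk
          have h1 := hC'A k hk
          rw [hC'app k, if_neg hjk] at h1
          rcases eq_or_ne i₀ k with h | h
          · rw [if_pos h] at h1 ⊢
            omega
          · rw [if_neg h] at h1 ⊢
            omega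
        have hgne : g ≠ A → g i₀ ≤ C i₀ → False → False := fun _ _ h => h
        by_cases hj₀last : j₀ = Fin.last n
        · have hgA' : g ≤ A := by
            rw [Finsupp.le_def]
            intro k
            rcases eq_or_ne k (Fin.last n) with hk | hk
            · rw [hk, hglast]
              omega
            · have hkn : (k:ℕ) < n := by
                rcases lt_or_eq_of_le (Fin.is_le k) with h' | h'
                · exact h'
                · exact absurd (Fin.ext (h'.trans (Fin.val_last n).symm)) hk
              have h2 := hgle' k
              rw [hCk k hkn (by rw [hj₀last]; exact Ne.symm hk)] at h2
              rcases eq_or_ne i₀ k with h | h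
              · rw [if_pos h] at h2
                omega
              · rw [if_neg h] at h2
                omega
          have hgAne : g ≠ A := by
            intro h
            have h2 := hgle' i₀
            have hji₀ : j₀ ≠ i₀ := Ne.symm hne₀
            rw [hCk i₀ hi₀n hji₀, if_pos rfl, h] at h2
            omega
          exact hAgen.2 g hgA' hgAne hg.1
        · have hj₀n' : (j₀:ℕ) < n := by
            rcases lt_or_eq_of_le hj₀n with h' | h'
            · exact h'
            · exact absurd (Fin.ext (h'.trans (Fin.val_last n).symm)) hj₀last
          have hCj₀ : C j₀ = A j₀ + 1 := by
            have h1 := hC'A j₀ hj₀n'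
            rw [hC'app j₀, if_pos rfl, if_neg hne₀] at h1
            have hCj₀1 : 1 ≤ C j₀ := Nat.one_le_iff_ne_zero.mpr hCj₀
            omega
          by_cases hgj₀ : g j₀ ≤ A j₀
          · have hgA' : g ≤ A := by
              rw [Finsupp.le_def]
              intro k
              rcases eq_or_ne k (Fin.last n) with hk | hk
              · rw [hk, hglast]
                omega
              · rcases eq_or_ne j₀ k with hjk | hjk
                · rw [← hjk]
                  exact hgj₀
                · have hkn : (k:ℕ) < n := by
                    rcases lt_or_eq_of_le (Fin.is_le k) with h' | h'
                    · exact h'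
                    · exact absurd (Fin.ext (h'.trans (Fin.val_last n).symm)) hk
                  have h2 := hgle' k
                  rw [hCk k hkn hjk] at h2
                  rcases eq_or_ne i₀ k with h | h
                  · rw [if_pos h] at h2
                    omega
                  · rw [if_neg h] at h2
                    omega
            have hgAne : g ≠ A := by
              intro h
              have h2 := hgle' i₀
              have hji₀ : j₀ ≠ i₀ := Ne.symm hne₀
              rw [hCk i₀ hi₀n hji₀, if_pos rfl, h] at h2
              omega
            exact hAgen.2 g hgA' hgAne hg.1
          · have hgj₀' : g j₀ = A j₀ + 1 := by
              have := hgle' j₀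
              omega
            have hgi₀ : g i₀ ≤ A i₀ - 1 := by
              have h2 := hgle' i₀
              have hji₀ : j₀ ≠ i₀ := Ne.symm hne₀
              rw [hCk i₀ hi₀n hji₀, if_pos rfl] at h2
              exact h2
            have h2 : mon (shiftM g i₀ j₀) ∈ I := hss g hg.1 i₀ j₀ (by omega) hij
            have h3 : shiftM g i₀ j₀ ≤ A := by
              rw [Finsupp.le_def]
              intro k
              rw [shiftM_apply]
              rcases eq_or_ne i₀ k with ha | ha
              · subst ha
                rw [if_pos rfl, if_neg (Ne.symm hne₀)]
                omega
              · rcases eq_or_ne j₀ k with hb | hb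
                · subst hb
                  rw [if_neg ha, if_pos rfl]
                  omega
                · rcases eq_or_ne k (Fin.last n) with hk | hk
                  · rw [if_neg ha, if_neg hb, hk, hglast]
                    omega
                  · have hkn : (k:ℕ) < n := by
                      rcases lt_or_eq_of_le (Fin.is_le k) with h' | h'
                      · exact h'
                      · exact absurd (Fin.ext (h'.trans (Fin.val_last n).symm)) hk
                    have h4 := hgle' k
                    rw [hCk k hkn hb, if_neg ha] at h4
                    rw [if_neg ha, if_neg hb]
                    omega
            have h4 : shiftM g i₀ j₀ = A := by
              by_contra hne4
              exact hAgen.2 _ h3 hne4 h2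
            have h5 : g = shiftM A j₀ i₀ := by
              ext k
              have hk4 := DFunLike.congr_fun h4 k
              rw [shiftM_apply] at hk4
              rw [shiftM_apply]
              rcases eq_or_ne i₀ k with ha | ha
              · subst ha
                rw [if_pos rfl, if_neg (Ne.symm hne₀)] at hk4
                rw [if_neg (Ne.symm hne₀), if_pos rfl]
                omega
              · rcases eq_or_ne j₀ k with hb | hb
                · subst hb
                  rw [if_neg ha, if_pos rfl] at hk4
                  rw [if_pos rfl, if_neg ha]
                  omega
                · rw [if_neg ha, if_neg hb] at hk4
                  rw [if_neg hb, if_neg ha]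
                  omega
            exact no_rightshift_minGen hss hA j₀ i₀ hij hj₀n' (by omega) (h5 ▸ hg)
      · -- g is an expansion generator A + e_j : impossible
        have h2 := hgle' i₀
        rw [Finsupp.add_apply, Finsupp.single_apply] at h2
        rcases eq_or_ne j i₀ with h | h
        · rw [if_pos h] at h2
          omega
        · rw [if_neg h] at h2
          omega
  · -- Saturated
    apply le_antisymm
    · intro f hf
      have h1 : f * X (Fin.last n) ∈ expansionIdeal I A := by
        have := Submodule.mem_colon.mp hf (X (Fin.last n)) (X_mem_irr _)
        rwa [smul_eq_mul] at this
      rw [expansionIdeal, mem_span_mon_iff] at h1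
      rw [expansionIdeal, mem_span_mon_iff]
      intro m hm
      have hm' : m + Finsupp.single (Fin.last n) 1 ∈ (f * X (Fin.last n)).support := by
        rw [MvPolynomial.mem_support_iff, coeff_mul_X]
        exact MvPolynomial.mem_support_iff.mp hm
      obtain ⟨B, hB, hle⟩ := h1 _ hm'
      refine ⟨B, hB, Finsupp.le_def.mpr fun k => ?_⟩
      have hBlast := expansion_gen_last hss hsat hA hB
      have h3 := Finsupp.le_def.mp hle k
      rw [Finsupp.add_apply, Finsupp.single_apply] at h3
      rcases eq_or_ne (Fin.last n) k with h | h
      · rw [← h, hBlast]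
        omega
      · rw [if_neg h] at h3
        omega
    · intro f hf
      rw [Submodule.mem_colon]
      intro p hp
      rw [smul_eq_mul]
      exact Ideal.mul_mem_right p _ hf
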